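/- (Null-structure estimate.) For every m ≥ 0 there is a constant C > 0 with the following property. Let θ₁, θ₂ ∈ {+1,−1}, let ω, ω′ ∈ ℝ³ be unit vectors, let r₁, r₂ > 0 (with the additional requirement r₁ ≥ 1 and r₂ ≥ 1 when m > 0), and let δ > 0 satisfy |θ₁ω − θ₂ω′| ≤ δ, r₁⁻¹ ≤ 2¹⁰δ and r₂⁻¹ ≤ 2¹⁰δ. Then for all vectors v, w ∈ ℂ⁴, |⟨Π_{θ₁}ᵐ(r₁ω) v, β Π_{θ₂}ᵐ(r₂ω′) w⟩_{ℂ⁴}| ≤ C·δ·|v|·|w|, where ⟨·,·⟩_{ℂ⁴} is the standard Hermitian inner product on ℂ⁴ and |·| the associated norm. -/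

import Mathlib

noncomputable section
open Matrix Complex MeasureTheory

/-- ℝ³ with the Euclidean norm. -/
abbrev E3 := EuclideanSpace ℝ (Fin 3)

/-- The Dirac matrix β = [[I₂,0],[0,−I₂]]. -/
def diracBeta : Matrix (Fin 4) (Fin 4) ℂ :=
  !![1,0,0,0; 0,1,0,0; 0,0,-1,0; 0,0,0,-1]

/-- The Dirac matrices αʲ = [[0,σʲ],[σʲ,0]] built from the Pauli matrices. -/
def diracAlpha : Fin 3 → Matrix (Fin 4) (Fin 4) ℂ :=
  ![!![0,0,0,1; 0,0,1,0; 0,1,0,0; 1,0,0,0],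
    !![0,0,0,-Complex.I; 0,0,Complex.I,0; 0,-Complex.I,0,0; Complex.I,0,0,0],
    !![0,0,1,0; 0,0,0,-1; 1,0,0,0; 0,-1,0,0]]

/-- ξ·α = ξ₁α¹ + ξ₂α² + ξ₃α³. -/
def xiAlpha (ξ : E3) : Matrix (Fin 4) (Fin 4) ℂ := ∑ j, (ξ j : ℂ) • diracAlpha j

/-- The Dirac symbol ξ·α + mβ. -/
def diracSym (m : ℝ) (ξ : E3) : Matrix (Fin 4) (Fin 4) ℂ :=
  xiAlpha ξ + (m : ℂ) • diracBeta

/-- ⟨ξ⟩ₘ = (m² + |ξ|²)^(1/2). -/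
def bracket (m : ℝ) (ξ : E3) : ℝ := Real.sqrt (m ^ 2 + ‖ξ‖ ^ 2)

/-- The projection Π_θᵐ(ξ) = (1/2)[I₄ + θ⟨ξ⟩ₘ⁻¹(ξ·α + mβ)], for θ = ±1. -/
def proj (m θ : ℝ) (ξ : E3) : Matrix (Fin 4) (Fin 4) ℂ :=
  (1/2 : ℂ) • ((1 : Matrix (Fin 4) (Fin 4) ℂ)
    + ((θ : ℂ) * ((bracket m ξ : ℝ) : ℂ)⁻¹) • diracSym m ξ)

/-- The propagator symbol Uₘ(t,ξ) = cos(t⟨ξ⟩ₘ)·I₄ − i⟨ξ⟩ₘ⁻¹ sin(t⟨ξ⟩ₘ)·(ξ·α + mβ). -/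
def Uprop (m t : ℝ) (ξ : E3) : Matrix (Fin 4) (Fin 4) ℂ :=
  ((Real.cos (t * bracket m ξ) : ℝ) : ℂ) • (1 : Matrix (Fin 4) (Fin 4) ℂ) -
    (Complex.I * ((bracket m ξ : ℝ) : ℂ)⁻¹ * ((Real.sin (t * bracket m ξ) : ℝ) : ℂ))
      • diracSym m ξ

/-- The standard Hermitian inner product ⟨v,w⟩_{ℂ⁴} = Σⱼ conj(vⱼ)·wⱼ. -/
def cinner (v w : Fin 4 → ℂ) : ℂ := ∑ j, starRingEnd ℂ (v j) * w j

/-- The Hermitian norm |v| = (Σⱼ |vⱼ|²)^(1/2) on ℂ⁴. -/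
def cnorm (v : Fin 4 → ℂ) : ℝ := Real.sqrt (∑ j, ‖v j‖ ^ 2)

set_option maxHeartbeats 1000000 in
lemma diracSym_eq (m : ℝ) (ξ : E3) :
    diracSym m ξ =
      !![(m:ℂ), 0, (ξ 2 : ℂ), (ξ 0 : ℂ) - Complex.I * (ξ 1 : ℂ);
         0, (m:ℂ), (ξ 0 : ℂ) + Complex.I * (ξ 1 : ℂ), -(ξ 2 : ℂ);
         (ξ 2 : ℂ), (ξ 0 : ℂ) - Complex.I * (ξ 1 : ℂ), -(m:ℂ), 0;
         (ξ 0 : ℂ) + Complex.I * (ξ 1 : ℂ), -(ξ 2 : ℂ), 0, -(m:ℂ)] := by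
  have : xiAlpha ξ = (ξ 0 : ℂ) • diracAlpha 0 + (ξ 1 : ℂ) • diracAlpha 1
      + (ξ 2 : ℂ) • diracAlpha 2 := by
    rw [xiAlpha, Fin.sum_univ_three]
  rw [diracSym, this]
  ext i j
  fin_cases i <;> fin_cases j <;>
    simp [diracBeta, diracAlpha, Matrix.vecHead, Matrix.vecTail] <;> ring

lemma sym_herm (m : ℝ) (ξ : E3) : (diracSym m ξ)ᴴ = diracSym m ξ := by
  rw [diracSym_eq]
  ext i j
  fin_cases i <;> fin_cases j <;>
    simp [Matrix.conjTranspose_apply, Complex.conj_ofReal] <;> ring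

set_option maxHeartbeats 1000000 in
lemma sym_sq (m : ℝ) (ξ : E3) :
    diracSym m ξ * diracSym m ξ = ((m^2 + ‖ξ‖^2 : ℝ) : ℂ) • 1 := by
  have hn : (‖ξ‖^2 : ℝ) = (ξ 0)^2 + (ξ 1)^2 + (ξ 2)^2 := by
    rw [EuclideanSpace.norm_eq, Real.sq_sqrt (by positivity)]
    simp [Fin.sum_univ_three, sq_abs]
  rw [diracSym_eq, hn]
  ext i j
  fin_cases i <;> fin_cases j <;>
    simp [Matrix.mul_apply, Fin.sum_univ_four, Matrix.one_apply] <;> push_cast <;> ring_nf <;>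
      simp [Complex.I_sq] <;> ring_nf

set_option maxHeartbeats 1000000 in
lemma beta_sym (m : ℝ) (ξ : E3) :
    diracBeta * diracSym m ξ = diracSym m (-ξ) * diracBeta := by
  have h2 : ∀ j : Fin 3, ((-ξ) j : ℝ) = -(ξ j) := fun j => rfl
  rw [diracSym_eq, diracSym_eq, diracBeta]
  ext i j
  fin_cases i <;> fin_cases j <;>
    simp [Matrix.mul_apply, Fin.sum_univ_four, h2, Matrix.vecHead, Matrix.vecTail] <;> push_cast <;> ring




lemma bracket_nonneg (m : ℝ) (ξ : E3) : 0 ≤ bracket m ξ := Real.sqrt_nonneg _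
lemma bracket_sq (m : ℝ) (ξ : E3) : (bracket m ξ)^2 = m^2 + ‖ξ‖^2 :=
  Real.sq_sqrt (by positivity)
lemma bracket_neg (m : ℝ) (ξ : E3) : bracket m (-ξ) = bracket m ξ := by
  simp [bracket]

lemma norm_le_bracket (m : ℝ) (ξ : E3) : ‖ξ‖ ≤ bracket m ξ := by
  rw [bracket]
  nth_rewrite 1 [← Real.sqrt_sq (norm_nonneg ξ)]
  exact Real.sqrt_le_sqrt (by nlinarith [sq_nonneg m])

lemma proj_herm (m θ : ℝ) (ξ : E3) : (proj m θ ξ)ᴴ = proj m θ ξ := by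
  simp [proj, Matrix.conjTranspose_smul, Matrix.conjTranspose_add, sym_herm,
    Complex.conj_ofReal, _root_.map_mul, map_inv₀, map_div₀, _root_.map_one, map_ofNat]

lemma beta_proj (m θ : ℝ) (η : E3) :
    diracBeta * proj m θ η = proj m θ (-η) * diracBeta := by
  rw [proj, proj, bracket_neg, Matrix.mul_smul, Matrix.smul_mul]
  congr 1
  rw [mul_add, add_mul, mul_one, one_mul, Matrix.mul_smul, Matrix.smul_mul, beta_sym]

lemma proj_mul_opp (m θ : ℝ) (hθ : θ = 1 ∨ θ = -1) (ξ : E3) (hb : 0 < bracket m ξ) :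
    proj m θ ξ * proj m (-θ) ξ = 0 := by
  have hbne : (bracket m ξ : ℝ) ≠ 0 := ne_of_gt hb
  set A : Matrix (Fin 4) (Fin 4) ℂ :=
    ((θ : ℂ) * ((bracket m ξ : ℝ) : ℂ)⁻¹) • diracSym m ξ with hA
  have hAA : A * A = 1 := by
    rw [hA, Matrix.smul_mul, Matrix.mul_smul, smul_smul, sym_sq, smul_smul]
    have hθ2 : ((θ:ℂ))^2 = 1 := by rcases hθ with h | h <;> simp [h]
    have hb2 : (((bracket m ξ : ℝ) : ℂ))^2 = ((m^2 + ‖ξ‖^2 : ℝ) : ℂ) := by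
      rw [← Complex.ofReal_pow, bracket_sq]
    have hbne' : ((bracket m ξ : ℝ) : ℂ) ≠ 0 := by exact_mod_cast hbne
    have : (θ:ℂ) * (((bracket m ξ : ℝ)):ℂ)⁻¹ * ((θ:ℂ) * (((bracket m ξ : ℝ)):ℂ)⁻¹)
        * ((m^2 + ‖ξ‖^2 : ℝ) : ℂ) = 1 := by
      rw [← hb2]; field_simp; linear_combination hθ2
    rw [this, one_smul]
  have hminus : proj m (-θ) ξ = (1/2 : ℂ) • ((1 : Matrix (Fin 4) (Fin 4) ℂ) - A) := by
    rw [proj, hA]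
    push_cast
    rw [neg_mul, neg_smul, sub_eq_add_neg]
  rw [proj, hminus, ← hA, Matrix.smul_mul, Matrix.mul_smul, smul_smul]
  have : ((1 : Matrix (Fin 4) (Fin 4) ℂ) + A) * (1 - A) = 1 - A * A := by noncomm_ring
  rw [this, hAA, sub_self, smul_zero]




attribute [local instance] Matrix.frobeniusSeminormedAddCommGroup Matrix.frobeniusNormedSpace

lemma fro_def (M : Matrix (Fin 4) (Fin 4) ℂ) :
    ‖M‖ = Real.sqrt (∑ i, ∑ j, ‖M i j‖^2) := by
  simp_rw [Matrix.frobenius_norm_def, Real.rpow_two, Real.sqrt_eq_rpow]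

lemma sqrt_four : Real.sqrt 4 = 2 := by
  rw [show (4:ℝ) = 2^2 by norm_num, Real.sqrt_sq (by norm_num)]

lemma fro_one : ‖(1 : Matrix (Fin 4) (Fin 4) ℂ)‖ = 2 := by
  rw [fro_def]
  have : (∑ i, ∑ j, ‖(1 : Matrix (Fin 4) (Fin 4) ℂ) i j‖^2) = (4:ℝ) := by
    simp [Fin.sum_univ_four, Matrix.one_apply]
    norm_num
  rw [this, sqrt_four]

lemma fro_beta : ‖diracBeta‖ = 2 := by
  rw [fro_def]
  have : (∑ i, ∑ j, ‖diracBeta i j‖^2) = (4:ℝ) := by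
    simp [diracBeta, Fin.sum_univ_four, Matrix.vecHead, Matrix.vecTail]
    norm_num
  rw [this, sqrt_four]

lemma fro_alpha (j : Fin 3) : ‖diracAlpha j‖ = 2 := by
  fin_cases j <;>
  · rw [fro_def]
    rw [show (∑ i, ∑ j', ‖diracAlpha _ i j'‖^2) = (4:ℝ) by
      simp [diracAlpha, Fin.sum_univ_four, Matrix.vecHead, Matrix.vecTail]; norm_num]
    exact sqrt_four

lemma norm_sq_complex (z : ℂ) : ‖z‖^2 = z.re^2 + z.im^2 := by
  rw [Complex.sq_norm, Complex.normSq_apply]; ring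

lemma fro_sym (m : ℝ) (ξ : E3) : ‖diracSym m ξ‖ = 2 * bracket m ξ := by
  have hn : (‖ξ‖^2 : ℝ) = (ξ 0)^2 + (ξ 1)^2 + (ξ 2)^2 := by
    rw [EuclideanSpace.norm_eq, Real.sq_sqrt (by positivity)]
    simp [Fin.sum_univ_three, sq_abs]
  rw [diracSym_eq, fro_def]
  have hs : (∑ i, ∑ j, ‖(!![(m:ℂ), 0, (ξ 2 : ℂ), (ξ 0 : ℂ) - Complex.I * (ξ 1 : ℂ);
         0, (m:ℂ), (ξ 0 : ℂ) + Complex.I * (ξ 1 : ℂ), -(ξ 2 : ℂ);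
         (ξ 2 : ℂ), (ξ 0 : ℂ) - Complex.I * (ξ 1 : ℂ), -(m:ℂ), 0;
         (ξ 0 : ℂ) + Complex.I * (ξ 1 : ℂ), -(ξ 2 : ℂ), 0, -(m:ℂ)]) i j‖^2)
      = 4 * (m^2 + ‖ξ‖^2) := by
    rw [hn]
    have h1 : (‖(ξ 0:ℂ) - Complex.I * (ξ 1:ℂ)‖)^2 = (ξ 0)^2 + (ξ 1)^2 := by
      rw [Complex.sq_norm, Complex.normSq_apply]; simp; ring
    have h2 : (‖(ξ 0:ℂ) + Complex.I * (ξ 1:ℂ)‖)^2 = (ξ 0)^2 + (ξ 1)^2 := by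
      rw [Complex.sq_norm, Complex.normSq_apply]; simp; ring
    simp [Fin.sum_univ_four, norm_sq_complex, Matrix.vecHead, Matrix.vecTail, h1, h2]
    ring
  rw [hs, bracket, show (4:ℝ) * (m^2+‖ξ‖^2) = 4 * (m^2+‖ξ‖^2) from rfl,
    Real.sqrt_mul (by norm_num), sqrt_four]

lemma norm_coef (θ b : ℝ) (hθ : θ = 1 ∨ θ = -1) (hb : 0 < b) :
    ‖(θ : ℂ) * ((b : ℝ) : ℂ)⁻¹‖ = b⁻¹ := by
  rw [norm_mul, norm_inv, Complex.norm_real, Complex.norm_real,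
    Real.norm_eq_abs, Real.norm_eq_abs, abs_of_pos hb]
  rcases hθ with h | h <;> simp [h]

lemma fro_proj_le (m θ : ℝ) (ξ : E3) (hθ : θ = 1 ∨ θ = -1) (hb : 0 < bracket m ξ) :
    ‖proj m θ ξ‖ ≤ 2 := by
  rw [proj]
  calc ‖(1/2 : ℂ) • ((1 : Matrix (Fin 4) (Fin 4) ℂ)
        + ((θ : ℂ) * ((bracket m ξ : ℝ) : ℂ)⁻¹) • diracSym m ξ)‖
      = (1/2) * ‖(1 : Matrix (Fin 4) (Fin 4) ℂ)
        + ((θ : ℂ) * ((bracket m ξ : ℝ) : ℂ)⁻¹) • diracSym m ξ‖ := by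
        rw [norm_smul]; norm_num
    _ ≤ (1/2) * (‖(1 : Matrix (Fin 4) (Fin 4) ℂ)‖
        + ‖((θ : ℂ) * ((bracket m ξ : ℝ) : ℂ)⁻¹) • diracSym m ξ‖) := by
        gcongr; exact norm_add_le _ _
    _ = (1/2) * (2 + (bracket m ξ)⁻¹ * (2 * bracket m ξ)) := by
        rw [fro_one, norm_smul, norm_coef _ _ hθ hb, fro_sym]
    _ = 2 := by field_simp; norm_num

lemma xiAlpha_smul (t : ℝ) (ζ : E3) : xiAlpha (t • ζ) = (t : ℂ) • xiAlpha ζ := by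
  simp only [xiAlpha, Finset.smul_sum, smul_smul]
  refine Finset.sum_congr rfl fun j _ => ?_
  have h : ((t • ζ) j : ℝ) = t * ζ j := rfl
  rw [h, Complex.ofReal_mul]

lemma xiAlpha_sub (ζ ζ' : E3) : xiAlpha (ζ - ζ') = xiAlpha ζ - xiAlpha ζ' := by
  simp [xiAlpha, PiLp.sub_apply, Complex.ofReal_sub, sub_smul, Finset.sum_sub_distrib]

lemma xiAlpha_neg (ζ : E3) : xiAlpha (-ζ) = - xiAlpha ζ := by
  simp [xiAlpha, PiLp.neg_apply, Complex.ofReal_neg, neg_smul, Finset.sum_neg_distrib]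

lemma coord_le (x : E3) (j : Fin 3) : |x j| ≤ ‖x‖ := by
  rw [EuclideanSpace.norm_eq]
  calc |x j| = Real.sqrt (|x j|^2) := (Real.sqrt_sq (abs_nonneg _)).symm
    _ ≤ _ := by
        apply Real.sqrt_le_sqrt
        rw [_root_.sq_abs]
        have := Finset.single_le_sum (f := fun i => ‖x i‖^2)
          (fun i _ => by positivity) (Finset.mem_univ j)
        simpa [Real.norm_eq_abs, sq_abs] using this

lemma diff_eq (m θ₁ θ₂ : ℝ) (ξ η : E3) :
    proj m θ₂ (-η) - proj m (-θ₁) ξ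
      = (1/2 : ℂ) • (xiAlpha ((θ₁/bracket m ξ) • ξ - (θ₂/bracket m η) • η)
          + ((m * (θ₁/bracket m ξ + θ₂/bracket m η) : ℝ) : ℂ) • diracBeta) := by
  rw [proj, proj, bracket_neg, ← smul_sub]
  congr 1
  rw [add_sub_add_left_eq_sub, diracSym, diracSym, xiAlpha_neg,
    xiAlpha_sub, xiAlpha_smul, xiAlpha_smul]
  have h1 : ((-θ₁ : ℝ) : ℂ) * ((bracket m ξ : ℝ) : ℂ)⁻¹ = -((θ₁ / bracket m ξ : ℝ) : ℂ) := by
    push_cast; ring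
  have h2 : ((θ₂ : ℝ) : ℂ) * ((bracket m η : ℝ) : ℂ)⁻¹ = ((θ₂ / bracket m η : ℝ) : ℂ) := by
    push_cast; ring
  rw [h1, h2]
  push_cast
  module

lemma fro_diff_le (ζ : E3) (c : ℝ) :
    ‖(1/2:ℂ) • (xiAlpha ζ + ((c : ℝ) : ℂ) • diracBeta)‖ ≤ 3 * ‖ζ‖ + |c| := by
  have hxa : ‖xiAlpha ζ‖ ≤ 6 * ‖ζ‖ := by
    rw [xiAlpha]
    calc ‖∑ j, ((ζ j : ℝ) : ℂ) • diracAlpha j‖ ≤ ∑ j, ‖((ζ j : ℝ) : ℂ) • diracAlpha j‖ :=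
          norm_sum_le _ _
      _ = ∑ j : Fin 3, |ζ j| * 2 := by
          refine Finset.sum_congr rfl fun j _ => ?_
          rw [norm_smul, fro_alpha, Complex.norm_real, Real.norm_eq_abs]
      _ ≤ ∑ j : Fin 3, ‖ζ‖ * 2 := by
          refine Finset.sum_le_sum fun j _ => by
            have := coord_le ζ j; nlinarith [norm_nonneg ζ]
      _ = 6 * ‖ζ‖ := by simp [Fin.sum_univ_three]; ring
  calc ‖(1/2:ℂ) • (xiAlpha ζ + ((c : ℝ) : ℂ) • diracBeta)‖
      = (1/2) * ‖xiAlpha ζ + ((c : ℝ) : ℂ) • diracBeta‖ := by rw [norm_smul]; norm_num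
    _ ≤ (1/2) * (‖xiAlpha ζ‖ + ‖((c : ℝ) : ℂ) • diracBeta‖) := by
        gcongr; exact norm_add_le _ _
    _ = (1/2) * (‖xiAlpha ζ‖ + |c| * 2) := by
        rw [norm_smul, fro_beta, Complex.norm_real, Real.norm_eq_abs]
    _ ≤ (1/2) * (6 * ‖ζ‖ + |c| * 2) := by gcongr
    _ = 3 * ‖ζ‖ + |c| := by ring

lemma cnorm_nonneg (v : Fin 4 → ℂ) : 0 ≤ cnorm v := Real.sqrt_nonneg _

lemma sum_le_sqrt_mul_sqrt (f g : Fin 4 → ℝ) (hf : ∀ j, 0 ≤ f j) (hg : ∀ j, 0 ≤ g j) :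
    ∑ j, f j * g j ≤ Real.sqrt (∑ j, f j ^ 2) * Real.sqrt (∑ j, g j ^ 2) := by
  have h := Finset.sum_mul_sq_le_sq_mul_sq Finset.univ f g
  have h0 : 0 ≤ ∑ j, f j * g j :=
    Finset.sum_nonneg fun j _ => mul_nonneg (hf j) (hg j)
  calc ∑ j, f j * g j = Real.sqrt ((∑ j, f j * g j)^2) := (Real.sqrt_sq h0).symm
    _ ≤ Real.sqrt ((∑ j, f j ^2) * (∑ j, g j ^2)) := Real.sqrt_le_sqrt h
    _ = _ := Real.sqrt_mul (Finset.sum_nonneg fun j _ => sq_nonneg _) _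

lemma norm_cinner_le (v w : Fin 4 → ℂ) : ‖cinner v w‖ ≤ cnorm v * cnorm w := by
  calc ‖cinner v w‖ ≤ ∑ j, ‖starRingEnd ℂ (v j) * w j‖ := norm_sum_le _ _
    _ = ∑ j, ‖v j‖ * ‖w j‖ := by
        refine Finset.sum_congr rfl fun j _ => ?_
        rw [norm_mul, RCLike.norm_conj]
    _ ≤ cnorm v * cnorm w :=
        sum_le_sqrt_mul_sqrt _ _ (fun j => norm_nonneg _) (fun j => norm_nonneg _)

lemma cnorm_mulVec_le (M : Matrix (Fin 4) (Fin 4) ℂ) (v : Fin 4 → ℂ) :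
    cnorm (M.mulVec v) ≤ ‖M‖ * cnorm v := by
  have hrow : ∀ i, ‖(M.mulVec v) i‖ ≤ Real.sqrt (∑ j, ‖M i j‖^2) * cnorm v := by
    intro i
    calc ‖(M.mulVec v) i‖ = ‖∑ j, M i j * v j‖ := by rw [Matrix.mulVec, dotProduct]
      _ ≤ ∑ j, ‖M i j * v j‖ := norm_sum_le _ _
      _ = ∑ j, ‖M i j‖ * ‖v j‖ := by simp [norm_mul]
      _ ≤ _ := sum_le_sqrt_mul_sqrt _ _ (fun j => norm_nonneg _) (fun j => norm_nonneg _)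
  rw [cnorm, fro_def]
  calc Real.sqrt (∑ i, ‖(M.mulVec v) i‖^2)
      ≤ Real.sqrt (∑ i, (∑ j, ‖M i j‖^2) * cnorm v ^ 2) := by
        apply Real.sqrt_le_sqrt
        refine Finset.sum_le_sum fun i _ => ?_
        have h := hrow i
        have h2 : ‖(M.mulVec v) i‖^2 ≤ (Real.sqrt (∑ j, ‖M i j‖^2) * cnorm v)^2 := by
          have := norm_nonneg ((M.mulVec v) i); nlinarith
        calc ‖(M.mulVec v) i‖^2 ≤ (Real.sqrt (∑ j, ‖M i j‖^2) * cnorm v)^2 := h2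
          _ = (∑ j, ‖M i j‖^2) * cnorm v ^2 := by
            rw [mul_pow, Real.sq_sqrt (Finset.sum_nonneg fun j _ => sq_nonneg _)]
    _ = Real.sqrt (∑ i, ∑ j, ‖M i j‖^2) * cnorm v := by
        rw [← Finset.sum_mul, Real.sqrt_mul
          (Finset.sum_nonneg fun i _ => Finset.sum_nonneg fun j _ => sq_nonneg _),
          Real.sqrt_sq (cnorm_nonneg v)]

lemma cinner_mulVec (M : Matrix (Fin 4) (Fin 4) ℂ) (v w : Fin 4 → ℂ) :
    cinner (M.mulVec v) w = cinner v (Mᴴ.mulVec w) := by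
  simp only [cinner, Matrix.mulVec, dotProduct, Matrix.conjTranspose_apply, map_sum,
    _root_.map_mul, Finset.sum_mul, Finset.mul_sum, starRingEnd_apply]
  rw [Finset.sum_comm]
  refine Finset.sum_congr rfl fun j _ => Finset.sum_congr rfl fun i _ => ?_
  ring

lemma one_sub_ratio (m r : ℝ) (hm : 0 ≤ m) (hr : 0 < r) :
    0 ≤ 1 - r / Real.sqrt (m^2 + r^2) ∧ 1 - r / Real.sqrt (m^2 + r^2) ≤ m^2 / r^2 := by
  set b := Real.sqrt (m^2 + r^2) with hb
  have hb2 : b^2 = m^2 + r^2 := Real.sq_sqrt (by positivity)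
  have hrb : r ≤ b := by
    rw [hb]
    nth_rewrite 1 [← Real.sqrt_sq hr.le]
    exact Real.sqrt_le_sqrt (by nlinarith [sq_nonneg m])
  have hbpos : 0 < b := lt_of_lt_of_le hr hrb
  constructor
  · have : r / b ≤ 1 := (div_le_one hbpos).mpr hrb
    linarith
  · have key : (b - r) * r^2 ≤ m^2 * b := by
      have h1 : 0 ≤ b - r := by linarith
      have h2 : (0:ℝ) ≤ (b + r) * b - r^2 := by nlinarith
      nlinarith [mul_nonneg h1 h2]
    have heq : 1 - r / b = (b - r) / b := by field_simp
    rw [heq, div_le_div_iff₀ hbpos (by positivity)]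
    linarith [key]

lemma ratio_est (m r δ : ℝ) (hm : 0 ≤ m) (hr : 0 < r) (hr1 : 0 < m → 1 ≤ r)
    (hδ : 0 < δ) (hrδ : r⁻¹ ≤ 2^10 * δ) :
    1 - r / Real.sqrt (m^2 + r^2) ≤ 2^10 * m^2 * δ := by
  rcases eq_or_lt_of_le hm with h0 | hmpos
  · have hs : Real.sqrt (m^2 + r^2) = r := by
      rw [← h0]; norm_num; exact Real.sqrt_sq hr.le
    rw [hs, ← h0]
    have : r / r = 1 := div_self (ne_of_gt hr)
    rw [this]; norm_num
  · have h := (one_sub_ratio m r hm hr).2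
    have hr1' : 1 ≤ r := hr1 hmpos
    have hrinv : 0 < r⁻¹ := by positivity
    have h2 : 1 ≤ 2^10 * δ * r := by
      have := mul_le_mul_of_nonneg_right hrδ hr.le
      rw [inv_mul_cancel₀ (ne_of_gt hr)] at this
      linarith
    have h3 : m^2 / r^2 ≤ 2^10 * m^2 * δ := by
      rw [div_le_iff₀ (by positivity)]
      nlinarith [sq_nonneg m, mul_le_mul_of_nonneg_left h2 (sq_nonneg m)]
    linarith

/-- the null-structure estimate
|⟨Π_{θ₁}ᵐ(r₁ω) v, β Π_{θ₂}ᵐ(r₂ω′) w⟩| ≤ C δ |v||w|. -/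
theorem null_structure_estimate (m : ℝ) (hm : 0 ≤ m) :
    ∃ C > 0, ∀ θ₁ θ₂ : ℝ, (θ₁ = 1 ∨ θ₁ = -1) → (θ₂ = 1 ∨ θ₂ = -1) →
      ∀ ω ω' : E3, ‖ω‖ = 1 → ‖ω'‖ = 1 →
      ∀ r₁ r₂ : ℝ, 0 < r₁ → 0 < r₂ → (0 < m → 1 ≤ r₁ ∧ 1 ≤ r₂) →
      ∀ δ : ℝ, 0 < δ → ‖θ₁ • ω - θ₂ • ω'‖ ≤ δ →
        r₁⁻¹ ≤ 2 ^ 10 * δ → r₂⁻¹ ≤ 2 ^ 10 * δ →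
      ∀ v w : Fin 4 → ℂ,
        ‖cinner ((proj m θ₁ (r₁ • ω)).mulVec v)
            ((diracBeta * proj m θ₂ (r₂ • ω')).mulVec w)‖
          ≤ C * δ * cnorm v * cnorm w := by
  refine ⟨4 * (3 + 3 * 2^11 * m^2 + 2^11 * m), by nlinarith [sq_nonneg m], ?_⟩
  intro θ₁ θ₂ hθ₁ hθ₂ ω ω' hω hω' r₁ r₂ hr₁ hr₂ hr1 δ hδ hδω hr₁δ hr₂δ v w
  set ξ : E3 := r₁ • ω with hξ
  set η : E3 := r₂ • ω' with hη
  have hnξ : ‖ξ‖ = r₁ := by rw [hξ, norm_smul, hω, Real.norm_eq_abs, _root_.abs_of_pos hr₁, mul_one]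
  have hnη : ‖η‖ = r₂ := by rw [hη, norm_smul, hω', Real.norm_eq_abs, _root_.abs_of_pos hr₂, mul_one]
  have hb₁ : bracket m ξ = Real.sqrt (m^2 + r₁^2) := by rw [bracket, hnξ]
  have hb₂ : bracket m η = Real.sqrt (m^2 + r₂^2) := by rw [bracket, hnη]
  have hrb₁ : r₁ ≤ bracket m ξ := hnξ ▸ norm_le_bracket m ξ
  have hrb₂ : r₂ ≤ bracket m η := hnη ▸ norm_le_bracket m η
  have hb₁pos : 0 < bracket m ξ := lt_of_lt_of_le hr₁ hrb₁
  have hb₂pos : 0 < bracket m η := lt_of_lt_of_le hr₂ hrb₂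
  have habs₁ : |θ₁| = 1 := by rcases hθ₁ with h | h <;> simp [h]
  have habs₂ : |θ₂| = 1 := by rcases hθ₂ with h | h <;> simp [h]
  -- the decomposition
  have hM : (proj m θ₁ ξ)ᴴ * (diracBeta * proj m θ₂ η)
      = proj m θ₁ ξ * ((proj m θ₂ (-η) - proj m (-θ₁) ξ) * diracBeta) := by
    rw [proj_herm, beta_proj, sub_mul, mul_sub,
      ← mul_assoc (proj m θ₁ ξ) (proj m (-θ₁) ξ) diracBeta,
      proj_mul_opp m θ₁ hθ₁ ξ hb₁pos, Matrix.zero_mul, sub_zero]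
  -- the vector ζ and coefficient
  set t₁ : ℝ := θ₁ / bracket m ξ with ht₁
  set t₂ : ℝ := θ₂ / bracket m η with ht₂
  set ζ : E3 := t₁ • ξ - t₂ • η with hζ
  -- estimate ‖ζ‖
  have hs₁ : 1 - r₁ / bracket m ξ ≤ 2^10 * m^2 * δ := by
    rw [hb₁]; exact ratio_est m r₁ δ hm hr₁ (fun h => (hr1 h).1) hδ hr₁δ
  have hs₂ : 1 - r₂ / bracket m η ≤ 2^10 * m^2 * δ := by
    rw [hb₂]; exact ratio_est m r₂ δ hm hr₂ (fun h => (hr1 h).2) hδ hr₂δ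
  have hs₁0 : 0 ≤ 1 - r₁ / bracket m ξ := by rw [hb₁]; exact (one_sub_ratio m r₁ hm hr₁).1
  have hs₂0 : 0 ≤ 1 - r₂ / bracket m η := by rw [hb₂]; exact (one_sub_ratio m r₂ hm hr₂).1
  have hζnorm : ‖ζ‖ ≤ δ + 2^10 * m^2 * δ + 2^10 * m^2 * δ := by
    have hζeq : ζ = (θ₁ • ω - θ₂ • ω')
        + ((θ₁ * (r₁ / bracket m ξ - 1)) • ω - (θ₂ * (r₂ / bracket m η - 1)) • ω') := by
      rw [hζ, hξ, hη, smul_smul, smul_smul, ht₁, ht₂]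
      have e₁ : θ₁ / bracket m ξ * r₁ = θ₁ * (r₁ / bracket m ξ) := by ring
      have e₂ : θ₂ / bracket m η * r₂ = θ₂ * (r₂ / bracket m η) := by ring
      rw [e₁, e₂]
      module
    calc ‖ζ‖ ≤ ‖θ₁ • ω - θ₂ • ω'‖
        + (‖(θ₁ * (r₁ / bracket m ξ - 1)) • ω‖ + ‖(θ₂ * (r₂ / bracket m η - 1)) • ω'‖) := by
          rw [hζeq]
          exact le_trans (norm_add_le _ _) (by gcongr; exact norm_sub_le _ _)
      _ ≤ δ + 2^10 * m^2 * δ + 2^10 * m^2 * δ := by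
          rw [norm_smul, norm_smul, hω, hω', Real.norm_eq_abs, Real.norm_eq_abs,
            _root_.abs_mul, _root_.abs_mul, habs₁, habs₂]
          have a₁ : |r₁ / bracket m ξ - 1| = 1 - r₁ / bracket m ξ := by
            rw [_root_.abs_sub_comm, _root_.abs_of_nonneg hs₁0]
          have a₂ : |r₂ / bracket m η - 1| = 1 - r₂ / bracket m η := by
            rw [_root_.abs_sub_comm, _root_.abs_of_nonneg hs₂0]
          rw [a₁, a₂]
          simp only [one_mul, mul_one]
          linarith
  -- estimate the mass coefficient
  have hmass : |m * (t₁ + t₂)| ≤ 2^11 * m * δ := by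
    have hti₁ : |t₁| ≤ r₁⁻¹ := by
      rw [ht₁, _root_.abs_div, habs₁, _root_.abs_of_pos hb₁pos]
      rw [one_div]
      exact inv_anti₀ hr₁ hrb₁
    have hti₂ : |t₂| ≤ r₂⁻¹ := by
      rw [ht₂, _root_.abs_div, habs₂, _root_.abs_of_pos hb₂pos]
      rw [one_div]
      exact inv_anti₀ hr₂ hrb₂
    calc |m * (t₁ + t₂)| = m * |t₁ + t₂| := by rw [_root_.abs_mul, _root_.abs_of_nonneg hm]
      _ ≤ m * (r₁⁻¹ + r₂⁻¹) := by
          have := abs_add_le t₁ t₂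
          have h2 : |t₁ + t₂| ≤ r₁⁻¹ + r₂⁻¹ := by linarith
          exact mul_le_mul_of_nonneg_left h2 hm
      _ ≤ m * (2^10 * δ + 2^10 * δ) := by
          have h3 : r₁⁻¹ + r₂⁻¹ ≤ 2^10*δ + 2^10*δ := by linarith
          exact mul_le_mul_of_nonneg_left h3 hm
      _ = 2^11 * m * δ := by ring
  -- norm of the difference matrix
  have hD : ‖proj m θ₂ (-η) - proj m (-θ₁) ξ‖
      ≤ (3 + 3 * 2^11 * m^2 + 2^11 * m) * δ := by
    rw [diff_eq]
    calc ‖(1/2:ℂ) • (xiAlpha ζ + ((m * (t₁ + t₂) : ℝ) : ℂ) • diracBeta)‖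
        ≤ 3 * ‖ζ‖ + |m * (t₁ + t₂)| := fro_diff_le ζ _
      _ ≤ 3 * (δ + 2^10 * m^2 * δ + 2^10 * m^2 * δ) + 2^11 * m * δ := by
          gcongr
      _ = (3 + 3 * 2^11 * m^2 + 2^11 * m) * δ := by ring
  -- assemble
  have hMn : ‖(proj m θ₁ ξ)ᴴ * (diracBeta * proj m θ₂ η)‖
      ≤ 4 * (3 + 3 * 2^11 * m^2 + 2^11 * m) * δ := by
    rw [hM]
    calc ‖proj m θ₁ ξ * ((proj m θ₂ (-η) - proj m (-θ₁) ξ) * diracBeta)‖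
        ≤ ‖proj m θ₁ ξ‖ * ‖(proj m θ₂ (-η) - proj m (-θ₁) ξ) * diracBeta‖ :=
          Matrix.frobenius_norm_mul _ _
      _ ≤ ‖proj m θ₁ ξ‖ * (‖proj m θ₂ (-η) - proj m (-θ₁) ξ‖ * ‖diracBeta‖) :=
          mul_le_mul_of_nonneg_left (Matrix.frobenius_norm_mul _ _) (norm_nonneg _)
      _ ≤ 2 * (((3 + 3 * 2^11 * m^2 + 2^11 * m) * δ) * 2) := by
          rw [fro_beta]
          have hp := fro_proj_le m θ₁ ξ hθ₁ hb₁pos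
          have hDnn : (0:ℝ) ≤ ‖proj m θ₂ (-η) - proj m (-θ₁) ξ‖ := norm_nonneg _
          gcongr
      _ = 4 * (3 + 3 * 2^11 * m^2 + 2^11 * m) * δ := by ring
  calc ‖cinner ((proj m θ₁ ξ).mulVec v) ((diracBeta * proj m θ₂ η).mulVec w)‖
      = ‖cinner v (((proj m θ₁ ξ)ᴴ * (diracBeta * proj m θ₂ η)).mulVec w)‖ := by
        rw [cinner_mulVec, Matrix.mulVec_mulVec]
    _ ≤ cnorm v * cnorm (((proj m θ₁ ξ)ᴴ * (diracBeta * proj m θ₂ η)).mulVec w) :=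
        norm_cinner_le _ _
    _ ≤ cnorm v * (‖(proj m θ₁ ξ)ᴴ * (diracBeta * proj m θ₂ η)‖ * cnorm w) := by
        exact mul_le_mul_of_nonneg_left (cnorm_mulVec_le _ _) (cnorm_nonneg v)
    _ ≤ cnorm v * ((4 * (3 + 3 * 2^11 * m^2 + 2^11 * m) * δ) * cnorm w) := by
        have := mul_le_mul_of_nonneg_right hMn (cnorm_nonneg w)
        exact mul_le_mul_of_nonneg_left this (cnorm_nonneg v)
    _ = 4 * (3 + 3 * 2^11 * m^2 + 2^11 * m) * δ * cnorm v * cnorm w := by ring
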